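/- arXiv:2105.11417 — 5 statements merged into one kernel-verified Lean document; each statement's English description precedes it below -/
import Mathlib

section
/- Let n, p, q be natural numbers and let L ∈ ℂ^{(2p+1)×(2q+1)} be a single-channel complex 2D convolution filter. Let J(L) = Σ_{i=-p}^{p} Σ_{j=-q}^{q} L_{p+i,q+j} · (P^(i) ⊗ P^(j)) be the Jacobian of the convolution on n×n inputs, and let conv_transpose(L) be the filter with [conv_transpose(L)]_{k,l} = conj(L_{2p-k,2q-l}). Then J(conv_transpose(L)) = (J(L))^H, the conjugate transpose of J(L). -/
open Matrix

open scoped Kronecker ComplexConjugate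

/-- The shift matrix `P^(k)`: the `n × n` matrix with `P^(k)_{i,j} = 1` if `i - j = k`
(as integers) and `0` otherwise. -/
noncomputable def shiftP (n : ℕ) (k : ℤ) : Matrix (Fin n) (Fin n) ℂ :=
  Matrix.of fun i j => if ((i : ℕ) : ℤ) - ((j : ℕ) : ℤ) = k then 1 else 0

/-- The Jacobian of the 2D convolution (zero padding, stride 1) with a single-channel complex
filter `L ∈ ℂ^{(2p+1)×(2q+1)}` on `n×n` inputs:
`J(L) = Σ_{i=-p}^{p} Σ_{j=-q}^{q} L_{p+i,q+j} • (P^(i) ⊗ P^(j))`. -/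
noncomputable def convJacobian (n p q : ℕ) (L : Fin (2 * p + 1) → Fin (2 * q + 1) → ℂ) :
    Matrix (Fin n × Fin n) (Fin n × Fin n) ℂ :=
  ∑ k : Fin (2 * p + 1), ∑ l : Fin (2 * q + 1),
    L k l • (shiftP n (((k : ℕ) : ℤ) - (p : ℤ)) ⊗ₖ shiftP n (((l : ℕ) : ℤ) - (q : ℤ)))

lemma kronShiftCT (n : ℕ) (i j : ℤ) :
    (shiftP n i ⊗ₖ shiftP n j)ᴴ = shiftP n (-i) ⊗ₖ shiftP n (-j) := by
  ext ⟨a,b⟩ ⟨c,d⟩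
  have h1 : (((c:ℕ):ℤ) - a = i) ↔ (((a:ℕ):ℤ) - c = -i) := by omega
  have h2 : (((d:ℕ):ℤ) - b = j) ↔ (((b:ℕ):ℤ) - d = -j) := by omega
  simp [conjTranspose_apply, shiftP, apply_ite (star : ℂ → ℂ), h1, h2, mul_comm]

/-- For a single-channel complex filter `L`, the Jacobian of the convolution with
`conv_transpose(L)_{k,l} = conj (L_{2p-k,2q-l})` equals the conjugate transpose of the Jacobian
of the convolution with `L`. -/
theorem convJacobian_conv_transpose (n p q : ℕ)
    (L : Fin (2 * p + 1) → Fin (2 * q + 1) → ℂ) :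
    convJacobian n p q (fun k l => conj (L k.rev l.rev)) = (convJacobian n p q L)ᴴ := by
  unfold convJacobian
  simp only [conjTranspose_sum, conjTranspose_smul, kronShiftCT]
  refine Fintype.sum_bijective Fin.rev Fin.rev_bijective _ _ fun k => ?_
  refine Fintype.sum_bijective Fin.rev Fin.rev_bijective _ _ fun l => ?_
  have hk : -(((k.rev : ℕ):ℤ) - p) = ((k:ℕ):ℤ) - p := by have := Fin.val_rev k; omega
  have hl : -(((l.rev : ℕ):ℤ) - q) = ((l:ℕ):ℤ) - q := by have := Fin.val_rev l; omega
  rw [hk, hl]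
  rfl
end

section
/- Let A ∈ ℂ^{n×n} be a skew-Hermitian matrix (A^H = -A) and let k be a natural number. Then ‖exp(A) - S_k(A)‖₂ ≤ ‖A‖₂^k / k!, where S_k(A) = Σ_{i=0}^{k-1} A^i / i! (with S_0(A) = 0). -/
open Matrix

open scoped Matrix.Norms.L2Operator

open NormedSpace Set Finset
noncomputable section


variable {n : ℕ}

lemma aux_comp_ofReal {E : Type*} [NormedAddCommGroup E] [NormedSpace ℂ E] {g : ℂ → E} {g' : E}
    {z : ℝ} (h : HasDerivAt g g' z) : HasDerivAt (fun t : ℝ => g (t : ℂ)) g' z := by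
  have := ((h.hasFDerivAt.restrictScalars ℝ).comp z Complex.ofRealCLM.hasFDerivAt).hasDerivAt
  simpa [Function.comp_def] using this

lemma aux_hasDerivAt (A : Matrix (Fin n) (Fin n) ℂ) (k : ℕ) (t : ℝ) :
    HasDerivAt (fun s : ℝ => exp ((s:ℂ) • A)
        - ∑ i ∈ Finset.range (k+1), ((Nat.factorial i : ℂ))⁻¹ • ((s:ℂ)^i • A ^ i))
      (A * (exp ((t:ℂ) • A)
        - ∑ i ∈ Finset.range k, ((Nat.factorial i : ℂ))⁻¹ • ((t:ℂ)^i • A ^ i))) t := by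
  have hexp : HasDerivAt (fun s : ℝ => exp ((s:ℂ) • A)) (A * exp ((t:ℂ) • A)) t :=
    aux_comp_ofReal (hasDerivAt_exp_smul_const' A (t:ℂ))
  have hsum : HasDerivAt
      (fun s : ℝ => ∑ i ∈ Finset.range (k+1), ((Nat.factorial i : ℂ))⁻¹ • ((s:ℂ)^i • A ^ i))
      (∑ i ∈ Finset.range (k+1),
        ((Nat.factorial i : ℂ))⁻¹ • (((i : ℂ) * (t:ℂ)^(i-1)) • A ^ i)) t := by
    apply HasDerivAt.fun_sum
    intro i _
    exact ((aux_comp_ofReal (hasDerivAt_pow i (t:ℂ))).smul_const (A ^ i)).const_smul ((Nat.factorial i : ℂ))⁻¹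
  have key : A * (exp ((t:ℂ) • A)
        - ∑ i ∈ Finset.range k, ((Nat.factorial i : ℂ))⁻¹ • ((t:ℂ)^i • A ^ i))
      = A * exp ((t:ℂ) • A) - ∑ i ∈ Finset.range (k+1),
        ((Nat.factorial i : ℂ))⁻¹ • (((i : ℂ) * (t:ℂ)^(i-1)) • A ^ i) := by
    rw [mul_sub, Finset.mul_sum, Finset.sum_range_succ']
    have h0 : ((Nat.factorial 0 : ℂ))⁻¹ • (((0:ℕ) : ℂ) * (t:ℂ)^(0-1)) • A ^ 0 = 0 := by
      simp
    rw [h0, add_zero]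
    congr 1
    apply Finset.sum_congr rfl
    intro j _
    have h1 : (Nat.factorial j : ℂ) ≠ 0 := Nat.cast_ne_zero.mpr (Nat.factorial_ne_zero j)
    have h2 : ((j : ℂ) + 1) ≠ 0 := by
      exact Nat.cast_add_one_ne_zero j
    have hA' : A * A ^ j = A ^ (j+1) := (pow_succ' A j).symm
    rw [mul_smul_comm, mul_smul_comm, hA', smul_smul, smul_smul, Nat.add_sub_cancel]
    congr 1
    push_cast [Nat.factorial_succ]
    field_simp
  rw [key]
  exact hexp.sub hsum

lemma aux_norm_exp_le_one' (B : Matrix (Fin n) (Fin n) ℂ) (hB : Bᴴ = -B) :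
    ‖exp B‖ ≤ 1 := by
  have hsq : ‖exp B‖ * ‖exp B‖ = ‖(1 : Matrix (Fin n) (Fin n) ℂ)‖ := by
    rw [← CStarRing.norm_star_mul_self]
    congr 1
    have hstar : star (exp B) = exp (-B) := by
      rw [star_exp]; exact congrArg _ hB
    rw [hstar, ← Matrix.exp_add_of_commute (-B) B (Commute.neg_left (Commute.refl B)), neg_add_cancel, exp_zero]
  have h1 : ‖(1 : Matrix (Fin n) (Fin n) ℂ)‖ ≤ 1 := by
    have h : ‖(1 : Matrix (Fin n) (Fin n) ℂ)‖ * ‖(1 : Matrix (Fin n) (Fin n) ℂ)‖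
        = ‖(1 : Matrix (Fin n) (Fin n) ℂ)‖ := by
      rw [← CStarRing.norm_star_mul_self]; simp
    nlinarith [norm_nonneg (1 : Matrix (Fin n) (Fin n) ℂ)]
  nlinarith [norm_nonneg (exp B)]

lemma aux_key (A : Matrix (Fin n) (Fin n) ℂ) (hA : Aᴴ = -A) (k : ℕ) :
    ∀ t ∈ Icc (0:ℝ) 1,
      ‖exp ((t:ℂ) • A) - ∑ i ∈ Finset.range k, ((Nat.factorial i : ℂ))⁻¹ • ((t:ℂ)^i • A ^ i)‖
        ≤ ‖A‖ ^ k / (Nat.factorial k : ℝ) * t ^ k := by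
  induction k with
  | zero =>
    intro t ht
    have hskew : ((t:ℂ) • A)ᴴ = -((t:ℂ) • A) := by
      rw [conjTranspose_smul, hA]
      simp [Complex.star_def, Complex.conj_ofReal]
    simpa using aux_norm_exp_le_one' _ hskew
  | succ k ih =>
    have hfact : (Nat.factorial k : ℝ) ≠ 0 := Nat.cast_ne_zero.mpr (Nat.factorial_ne_zero k)
    set C : ℝ := ‖A‖^(k+1) / (Nat.factorial (k+1) : ℝ) with hC
    have main := image_norm_le_of_norm_deriv_right_le_deriv_boundary
      (f := fun t : ℝ => exp ((t:ℂ) • A)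
          - ∑ i ∈ Finset.range (k+1), ((Nat.factorial i : ℂ))⁻¹ • ((t:ℂ)^i • A ^ i))
      (f' := fun t : ℝ => A * (exp ((t:ℂ) • A)
          - ∑ i ∈ Finset.range k, ((Nat.factorial i : ℂ))⁻¹ • ((t:ℂ)^i • A ^ i)))
      (a := 0) (b := 1)
      (B := fun t => C * t^(k+1)) (B' := fun t => C * ((k+1 : ℕ) * t^(k+1-1)))
      (fun x _ => (aux_hasDerivAt A k x).continuousAt.continuousWithinAt)
      (fun x _ => (aux_hasDerivAt A k x).hasDerivWithinAt)
      ?ha (fun x => (hasDerivAt_pow (k+1) x).const_mul C) ?bound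
    case ha =>
      have hz : ∑ i ∈ Finset.range (k+1), ((Nat.factorial i : ℂ))⁻¹ • ((0:ℂ)^i • A ^ i)
          = 1 := by
        rw [Finset.sum_eq_single 0]
        · simp
        · intro b _ hb
          simp [zero_pow hb]
        · intro h
          exact absurd (Finset.mem_range.mpr (Nat.succ_pos k)) h
      simp [hz]
    case bound =>
      intro x hx
      have hx' : x ∈ Icc (0:ℝ) 1 := ⟨hx.1, le_of_lt hx.2⟩
      calc ‖A * (exp ((x:ℂ) • A)
            - ∑ i ∈ Finset.range k, ((Nat.factorial i : ℂ))⁻¹ • ((x:ℂ)^i • A ^ i))‖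
          ≤ ‖A‖ * ‖exp ((x:ℂ) • A)
            - ∑ i ∈ Finset.range k, ((Nat.factorial i : ℂ))⁻¹ • ((x:ℂ)^i • A ^ i)‖ :=
            norm_mul_le _ _
        _ ≤ ‖A‖ * (‖A‖ ^ k / (Nat.factorial k : ℝ) * x ^ k) :=
            mul_le_mul_of_nonneg_left (ih x hx') (norm_nonneg A)
        _ = C * ((k+1 : ℕ) * x^(k+1-1)) := by
            rw [hC]
            push_cast [Nat.factorial_succ, Nat.add_sub_cancel]
            field_simp
            ring
    intro t ht
    calc ‖exp ((t:ℂ) • A)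
          - ∑ i ∈ Finset.range (k+1), ((Nat.factorial i : ℂ))⁻¹ • ((t:ℂ)^i • A ^ i)‖
        ≤ C * t^(k+1) := main ht
      _ = ‖A‖ ^ (k+1) / (Nat.factorial (k+1) : ℝ) * t ^ (k+1) := by rw [hC]


end

/-- For a complex skew-Hermitian matrix `A` (`Aᴴ = -A`), the spectral norm of the difference
between the matrix exponential `exp(A)` and its `k`-term Taylor approximation
`S_k(A) = Σ_{i=0}^{k-1} A^i / i!` is at most `‖A‖₂^k / k!`. -/
theorem norm_exp_sub_taylor_le {n : ℕ} (A : Matrix (Fin n) (Fin n) ℂ)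
    (hA : Aᴴ = -A) (k : ℕ) :
    ‖NormedSpace.exp A - ∑ i ∈ Finset.range k, ((Nat.factorial i : ℂ))⁻¹ • A ^ i‖ ≤
      ‖A‖ ^ k / (Nat.factorial k : ℝ) := by
  have h := aux_key A hA k 1 (Set.mem_Icc.mpr ⟨zero_le_one, le_refl 1⟩)
  simpa using h
end

section
/- Let n, p, q, r be natural numbers, m a positive natural number, and let L ∈ ℂ^{m×m×(2p+1)×(2q+1)×(2r+1)} be a complex 3D convolution filter. Let J(L) denote the Jacobian of the convolution with filter L on m-channel n×n×n inputs (defined explicitly in the context), and let conv3d_transpose(L) be the filter with [conv3d_transpose(L)]_{a,b,s,t,u} = conj(L_{b,a,2p-s,2q-t,2r-u}). Then J(conv3d_transpose(L)) = (J(L))^H, the conjugate transpose of J(L). -/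
open Matrix

open scoped Kronecker ComplexConjugate

/-- The Jacobian of the 3D convolution (zero padding, stride 1) with a complex filter
`L ∈ ℂ^{m×m×(2p+1)×(2q+1)×(2r+1)}` on `m`-channel `n×n×n` inputs: the block matrix whose `(a,b)`
block is `Σ_{i=-p}^{p} Σ_{j=-q}^{q} Σ_{k=-r}^{r} L_{a,b,p+i,q+j,r+k} • (P^(i) ⊗ P^(j) ⊗ P^(k))`. -/
noncomputable def conv3dJacobian (n p q r m : ℕ)
    (L : Fin m → Fin m → Fin (2 * p + 1) → Fin (2 * q + 1) → Fin (2 * r + 1) → ℂ) :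
    Matrix (Fin m × (Fin n × Fin n) × Fin n) (Fin m × (Fin n × Fin n) × Fin n) ℂ :=
  Matrix.of fun x y =>
    ∑ s : Fin (2 * p + 1), ∑ t : Fin (2 * q + 1), ∑ u : Fin (2 * r + 1),
      L x.1 y.1 s t u *
        ((shiftP n (((s : ℕ) : ℤ) - (p : ℤ)) ⊗ₖ shiftP n (((t : ℕ) : ℤ) - (q : ℤ))) ⊗ₖ
          shiftP n (((u : ℕ) : ℤ) - (r : ℤ))) x.2 y.2

lemma shiftP_rev {n P : ℕ} (s : Fin (2 * P + 1)) (i j : Fin n) :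
    shiftP n (((s.rev : ℕ) : ℤ) - (P : ℤ)) i j =
      conj (shiftP n (((s : ℕ) : ℤ) - (P : ℤ)) j i) := by
  simp only [shiftP, Matrix.of_apply, Fin.val_rev]
  rw [apply_ite conj, _root_.map_one, map_zero]
  have hs := s.isLt
  congr 1
  simp only [eq_iff_iff]
  omega

/-- For a complex 3D filter `L`, the Jacobian of the convolution with
`conv3d_transpose(L)_{a,b,s,t,u} = conj (L_{b,a,2p-s,2q-t,2r-u})` equals the conjugate transpose
of the Jacobian of the convolution with `L`. -/
theorem conv3dJacobian_conv_transpose (n p q r m : ℕ) (hm : 0 < m)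
    (L : Fin m → Fin m → Fin (2 * p + 1) → Fin (2 * q + 1) → Fin (2 * r + 1) → ℂ) :
    conv3dJacobian n p q r m (fun a b s t u => conj (L b a s.rev t.rev u.rev)) =
      (conv3dJacobian n p q r m L)ᴴ := by
  ext x y
  obtain ⟨a, ⟨i1, i2⟩, i3⟩ := x
  obtain ⟨b, ⟨j1, j2⟩, j3⟩ := y
  simp only [conv3dJacobian, conjTranspose_apply, Matrix.of_apply, star_sum, star_mul', Complex.star_def]
  refine Fintype.sum_bijective (Fin.rev : Fin (2*p+1) → Fin (2*p+1)) Fin.rev_bijective _ _ fun s => ?_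
  refine Fintype.sum_bijective (Fin.rev : Fin (2*q+1) → Fin (2*q+1)) Fin.rev_bijective _ _ fun t => ?_
  refine Fintype.sum_bijective (Fin.rev : Fin (2*r+1) → Fin (2*r+1)) Fin.rev_bijective _ _ fun u => ?_
  simp only [Fin.rev_rev, kroneckerMap_apply, _root_.map_mul, Complex.conj_conj, shiftP_rev]
end

section
/- Let n, p, q, r be natural numbers, m a positive natural number, and let L ∈ ℂ^{m×m×(2p+1)×(2q+1)×(2r+1)} be a complex 3D convolution filter, with Jacobian J(L) on m-channel n×n×n inputs (defined explicitly in the context). Assume n ≥ 2p+1, n ≥ 2q+1 and n ≥ 2r+1. Then J(L) is skew-Hermitian (J(L)^H = -J(L)) if and only if there exists a filter M ∈ ℂ^{m×m×(2p+1)×(2q+1)×(2r+1)} such that L = M - conv3d_transpose(M), where [conv3d_transpose(M)]_{a,b,s,t,u} = conj(M_{b,a,2p-s,2q-t,2r-u}). -/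
open Matrix

open scoped Kronecker ComplexConjugate

lemma conj_shiftP (n : ℕ) (k : ℤ) (i j : Fin n) :
    star (shiftP n k i j) = shiftP n k i j := by
  simp only [shiftP, of_apply]; split_ifs <;> simp

lemma rev_int (p' : ℕ) (s : Fin (2 * p' + 1)) :
    ((s.rev : ℕ) : ℤ) - (p' : ℤ) = -(((s : ℕ) : ℤ) - (p' : ℤ)) := by
  have := s.isLt
  rw [Fin.val_rev]
  omega

lemma shiftP_swap (n p' : ℕ) (s : Fin (2 * p' + 1)) (i j : Fin n) :
    shiftP n (((s : ℕ) : ℤ) - (p' : ℤ)) j i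
      = shiftP n (((s.rev : ℕ) : ℤ) - (p' : ℤ)) i j := by
  simp only [shiftP, of_apply, rev_int]
  congr 1
  simp only [eq_iff_iff]
  omega

lemma conv3dJacobian_neg (n p q r m : ℕ)
    (L : Fin m → Fin m → Fin (2 * p + 1) → Fin (2 * q + 1) → Fin (2 * r + 1) → ℂ) :
    conv3dJacobian n p q r m (fun a b s t u => -(L a b s t u))
      = -(conv3dJacobian n p q r m L) := by
  ext x y
  simp [conv3dJacobian, neg_mul, Finset.sum_neg_distrib]

lemma conv3dJacobian_conjTranspose (n p q r m : ℕ)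
    (L : Fin m → Fin m → Fin (2 * p + 1) → Fin (2 * q + 1) → Fin (2 * r + 1) → ℂ) :
    (conv3dJacobian n p q r m L)ᴴ
      = conv3dJacobian n p q r m
          (fun a b s t u => conj (L b a s.rev t.rev u.rev)) := by
  ext i j
  obtain ⟨a, ⟨x1, x2⟩, x3⟩ := i
  obtain ⟨b, ⟨y1, y2⟩, y3⟩ := j
  simp only [conjTranspose_apply, conv3dJacobian, of_apply, kroneckerMap_apply,
    star_sum, star_mul', conj_shiftP]
  refine Fintype.sum_equiv Fin.revPerm _ _ fun s => ?_
  refine Fintype.sum_equiv Fin.revPerm _ _ fun t => ?_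
  refine Fintype.sum_equiv Fin.revPerm _ _ fun u => ?_
  simp only [Fin.revPerm_apply, Fin.rev_rev]
  rw [shiftP_swap n p s, shiftP_swap n q t, shiftP_swap n r u]
  simp only [Complex.star_def]

lemma conv3dJacobian_extract (n p q r m : ℕ)
    (hp : 2 * p + 1 ≤ n) (hq : 2 * q + 1 ≤ n) (hr : 2 * r + 1 ≤ n)
    (L : Fin m → Fin m → Fin (2 * p + 1) → Fin (2 * q + 1) → Fin (2 * r + 1) → ℂ)
    (a b : Fin m) (s : Fin (2 * p + 1)) (t : Fin (2 * q + 1)) (u : Fin (2 * r + 1)) :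
    conv3dJacobian n p q r m L
        (a, ((⟨s.val, lt_of_lt_of_le s.isLt hp⟩, ⟨t.val, lt_of_lt_of_le t.isLt hq⟩),
          ⟨u.val, lt_of_lt_of_le u.isLt hr⟩))
        (b, ((⟨p, by omega⟩, ⟨q, by omega⟩), ⟨r, by omega⟩)) = L a b s t u := by
  simp only [conv3dJacobian, of_apply, kroneckerMap_apply, shiftP]
  rw [Fintype.sum_eq_single s, Fintype.sum_eq_single t, Fintype.sum_eq_single u]
  · simp
  · intro u' hu'
    have : ¬(((u : ℕ) : ℤ) - (r : ℤ) = ((u' : ℕ) : ℤ) - (r : ℤ)) := by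
      intro h; exact hu' (Fin.ext (by omega))
    simp [this]
  · intro t' ht'
    have : ¬(((t : ℕ) : ℤ) - (q : ℤ) = ((t' : ℕ) : ℤ) - (q : ℤ)) := by
      intro h; exact ht' (Fin.ext (by omega))
    simp [this]
  · intro s' hs'
    have : ¬(((s : ℕ) : ℤ) - (p : ℤ) = ((s' : ℕ) : ℤ) - (p : ℤ)) := by
      intro h; exact hs' (Fin.ext (by omega))
    simp [this]

/-- If `n ≥ 2p+1`, `n ≥ 2q+1` and `n ≥ 2r+1`, the Jacobian of the 3D convolution with a complex
filter `L` is skew-Hermitian if and only if `L = M - conv3d_transpose(M)` for some filter `M`,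
where `conv3d_transpose(M)_{a,b,s,t,u} = conj (M_{b,a,2p-s,2q-t,2r-u})`. -/
theorem conv3dJacobian_skewHermitian_iff (n p q r m : ℕ) (hm : 0 < m)
    (hp : 2 * p + 1 ≤ n) (hq : 2 * q + 1 ≤ n) (hr : 2 * r + 1 ≤ n)
    (L : Fin m → Fin m → Fin (2 * p + 1) → Fin (2 * q + 1) → Fin (2 * r + 1) → ℂ) :
    (conv3dJacobian n p q r m L)ᴴ = -(conv3dJacobian n p q r m L) ↔
      ∃ M : Fin m → Fin m → Fin (2 * p + 1) → Fin (2 * q + 1) → Fin (2 * r + 1) → ℂ,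
        L = fun a b s t u => M a b s t u - conj (M b a s.rev t.rev u.rev) := by
  constructor
  · intro h
    have hJ : conv3dJacobian n p q r m
        (fun a b s t u => conj (L b a s.rev t.rev u.rev))
        = conv3dJacobian n p q r m (fun a b s t u => -(L a b s t u)) := by
      rw [← conv3dJacobian_conjTranspose, h, conv3dJacobian_neg]
    have key : ∀ (a b : Fin m) (s : Fin (2*p+1)) (t : Fin (2*q+1)) (u : Fin (2*r+1)),
        conj (L b a s.rev t.rev u.rev) = -(L a b s t u) := by
      intro a b s t u
      have h2 : conv3dJacobian n p q r m
          (fun a b s t u => conj (L b a s.rev t.rev u.rev))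
          (a, ((⟨s.val, lt_of_lt_of_le s.isLt hp⟩, ⟨t.val, lt_of_lt_of_le t.isLt hq⟩),
            ⟨u.val, lt_of_lt_of_le u.isLt hr⟩))
          (b, ((⟨p, by omega⟩, ⟨q, by omega⟩), ⟨r, by omega⟩))
          = conv3dJacobian n p q r m (fun a b s t u => -(L a b s t u))
          (a, ((⟨s.val, lt_of_lt_of_le s.isLt hp⟩, ⟨t.val, lt_of_lt_of_le t.isLt hq⟩),
            ⟨u.val, lt_of_lt_of_le u.isLt hr⟩))
          (b, ((⟨p, by omega⟩, ⟨q, by omega⟩), ⟨r, by omega⟩)) := by rw [hJ]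
      rwa [conv3dJacobian_extract n p q r m hp hq hr,
        conv3dJacobian_extract n p q r m hp hq hr] at h2
    refine ⟨fun a b s t u => L a b s t u / 2, ?_⟩
    funext a b s t u
    rw [map_div₀, key a b s t u]
    rw [show conj (2 : ℂ) = 2 from by norm_num [Complex.ext_iff]]
    ring
  · rintro ⟨M, rfl⟩
    rw [conv3dJacobian_conjTranspose, ← conv3dJacobian_neg]
    have hfun : (fun (a b : Fin m) (s : Fin (2*p+1)) (t : Fin (2*q+1)) (u : Fin (2*r+1)) =>
        conj (M b a s.rev t.rev u.rev
          - conj (M a b s.rev.rev t.rev.rev u.rev.rev)))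
        = fun a b s t u => -(M a b s t u - conj (M b a s.rev t.rev u.rev)) := by
      funext a b s t u
      simp only [map_sub, Fin.rev_rev, Complex.conj_conj]
      ring
    rw [hfun]
end

section
/- Let n, p, q be natural numbers with n ≥ 2p+1 and n ≥ 2q+1, and let L ∈ ℂ^{(2p+1)×(2q+1)} be a single-channel complex 2D convolution filter with Jacobian J(L) on n×n inputs (defined explicitly in the context). Then J(L) is skew-Hermitian (J(L)^H = -J(L)) if and only if L_{k,l} = -conj(L_{2p-k,2q-l}) for all indices 0 ≤ k ≤ 2p, 0 ≤ l ≤ 2q. -/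
open Matrix

open scoped Kronecker ComplexConjugate

lemma conv_entry (n p q : ℕ) (L : Fin (2 * p + 1) → Fin (2 * q + 1) → ℂ)
    (a b c d : Fin n) :
    convJacobian n p q L (a, b) (c, d) =
      ∑ k : Fin (2 * p + 1), ∑ l : Fin (2 * q + 1),
        L k l * ((if ((a : ℕ) : ℤ) - ((c : ℕ) : ℤ) = ((k : ℕ) : ℤ) - (p : ℤ) then 1 else 0) *
          (if ((b : ℕ) : ℤ) - ((d : ℕ) : ℤ) = ((l : ℕ) : ℤ) - (q : ℤ) then 1 else 0)) := by
  simp [convJacobian, shiftP, Matrix.sum_apply, kroneckerMap_apply, mul_assoc]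

lemma conv_entry_eval (n p q : ℕ) (L : Fin (2 * p + 1) → Fin (2 * q + 1) → ℂ)
    (a b c d : Fin n) (k0 : Fin (2 * p + 1)) (l0 : Fin (2 * q + 1))
    (h1 : ((a : ℕ) : ℤ) - ((c : ℕ) : ℤ) = ((k0 : ℕ) : ℤ) - (p : ℤ))
    (h2 : ((b : ℕ) : ℤ) - ((d : ℕ) : ℤ) = ((l0 : ℕ) : ℤ) - (q : ℤ)) :
    convJacobian n p q L (a, b) (c, d) = L k0 l0 := by
  rw [conv_entry]
  have hA : ∀ k : Fin (2 * p + 1),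
      (((a : ℕ) : ℤ) - ((c : ℕ) : ℤ) = ((k : ℕ) : ℤ) - (p : ℤ)) ↔ k = k0 := by
    intro k; rw [Fin.ext_iff]; omega
  have hB : ∀ l : Fin (2 * q + 1),
      (((b : ℕ) : ℤ) - ((d : ℕ) : ℤ) = ((l : ℕ) : ℤ) - (q : ℤ)) ↔ l = l0 := by
    intro l; rw [Fin.ext_iff]; omega
  simp only [hA, hB]
  simp [mul_ite, ite_mul, Finset.sum_ite_eq']

lemma conv_entry_zero (n p q : ℕ) (L : Fin (2 * p + 1) → Fin (2 * q + 1) → ℂ)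
    (a b c d : Fin n)
    (h : (∀ k : Fin (2 * p + 1), ((a : ℕ) : ℤ) - ((c : ℕ) : ℤ) ≠ ((k : ℕ) : ℤ) - (p : ℤ)) ∨
         (∀ l : Fin (2 * q + 1), ((b : ℕ) : ℤ) - ((d : ℕ) : ℤ) ≠ ((l : ℕ) : ℤ) - (q : ℤ))) :
    convJacobian n p q L (a, b) (c, d) = 0 := by
  rw [conv_entry]
  refine Finset.sum_eq_zero fun k _ => Finset.sum_eq_zero fun l _ => ?_
  rcases h with h | h
  · simp [h k]
  · simp [h l]

/-- If `n ≥ 2p+1` and `n ≥ 2q+1`, the Jacobian of the convolution with a single-channel complex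
filter `L` is skew-Hermitian if and only if `L_{k,l} = -conj (L_{2p-k,2q-l})` for all indices. -/
theorem convJacobian_skewHermitian_iff (n p q : ℕ)
    (hp : 2 * p + 1 ≤ n) (hq : 2 * q + 1 ≤ n)
    (L : Fin (2 * p + 1) → Fin (2 * q + 1) → ℂ) :
    (convJacobian n p q L)ᴴ = -(convJacobian n p q L) ↔
      ∀ (k : Fin (2 * p + 1)) (l : Fin (2 * q + 1)), L k l = -conj (L k.rev l.rev) := by
  constructor
  · intro h k l
    have hkn : (k : ℕ) < n := lt_of_lt_of_le k.isLt hp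
    have hln : (l : ℕ) < n := lt_of_lt_of_le l.isLt hq
    have hpn : p < n := by omega
    have hqn : q < n := by omega
    have hpt := congrFun (congrFun h ((⟨p, hpn⟩ : Fin n), (⟨q, hqn⟩ : Fin n)))
      ((⟨(k : ℕ), hkn⟩ : Fin n), (⟨(l : ℕ), hln⟩ : Fin n))
    rw [Matrix.conjTranspose_apply, Matrix.neg_apply] at hpt
    rw [conv_entry_eval n p q L _ _ _ _ k l (by simp) (by simp)] at hpt
    rw [conv_entry_eval n p q L _ _ _ _ k.rev l.rev
      (by simp [Fin.val_rev]; omega) (by simp [Fin.val_rev]; omega)] at hpt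
    simpa using congrArg (starRingEnd ℂ) hpt
  · intro h
    ext ⟨a, b⟩ ⟨c, d⟩
    rw [Matrix.conjTranspose_apply, Matrix.neg_apply]
    by_cases hk : ∃ k0 : Fin (2 * p + 1),
        ((a : ℕ) : ℤ) - ((c : ℕ) : ℤ) = ((k0 : ℕ) : ℤ) - (p : ℤ)
    · by_cases hl : ∃ l0 : Fin (2 * q + 1),
          ((b : ℕ) : ℤ) - ((d : ℕ) : ℤ) = ((l0 : ℕ) : ℤ) - (q : ℤ)
      · obtain ⟨k0, hk0⟩ := hk
        obtain ⟨l0, hl0⟩ := hl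
        rw [conv_entry_eval n p q L a b c d k0 l0 hk0 hl0]
        rw [conv_entry_eval n p q L c d a b k0.rev l0.rev
          (by simp [Fin.val_rev]; omega) (by simp [Fin.val_rev]; omega)]
        rw [h k0 l0]
        simp
      · push_neg at hl
        rw [conv_entry_zero n p q L a b c d (Or.inr hl)]
        rw [conv_entry_zero n p q L c d a b (Or.inr ?_)]
        · simp
        · intro l0 hcontra
          exact hl l0.rev (by simp [Fin.val_rev] at hcontra ⊢; omega)
    · push_neg at hk
      rw [conv_entry_zero n p q L a b c d (Or.inl hk)]
      rw [conv_entry_zero n p q L c d a b (Or.inl ?_)]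
      · simp
      · intro k0 hcontra
        exact hk k0.rev (by simp [Fin.val_rev] at hcontra ⊢; omega)
end
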